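/- arXiv:2310.00218 — 3 statements merged into one kernel-verified Lean document; each statement's English description precedes it below -/
import Mathlib

section
/- Let Δ0 → Δ1 → ⋯ → Δk be a sequence of finite multisets of points in ℝ² where each Δ_{j-1} → Δ_j is a transformation by a rectangle R_j with diagonal points v_j = (a_j, b_j), w_j = (c_j, d_j). Define the signed area of R_j as −(a_j − c_j)(b_j − d_j) and f(Δ) = Σ_{(x,y) ∈ Δ} x·y. Then the sum of signed areas Σ_{j=1}^{k} (−(a_j − c_j)(b_j − d_j)) equals f(Δ_k) − f(Δ_0); in particular this sum depends only on Δ_0 and Δ_k and not on the chosen sequence of rectangles. -/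
noncomputable def rectTransform (v w : ℝ × ℝ) (Δ : Multiset (ℝ × ℝ)) : Multiset (ℝ × ℝ) :=
  (w.1, v.2) ::ₘ (v.1, w.2) ::ₘ ((Δ.erase v).erase w)

/-- `f(Δ) = Σ_{(x,y) ∈ Δ} x·y`. -/
def fsum (Δ : Multiset (ℝ × ℝ)) : ℝ := (Δ.map fun p => p.1 * p.2).sum

lemma fsum_cons (p : ℝ × ℝ) (Δ : Multiset (ℝ × ℝ)) :
    fsum (p ::ₘ Δ) = p.1 * p.2 + fsum Δ := by
  simp [fsum]

lemma fsum_erase {p : ℝ × ℝ} {Δ : Multiset (ℝ × ℝ)} (hp : p ∈ Δ) :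
    fsum (Δ.erase p) = fsum Δ - p.1 * p.2 := by
  have := fsum_cons p (Δ.erase p)
  rw [Multiset.cons_erase hp] at this
  linarith

lemma fsum_rect {v w : ℝ × ℝ} {Δ : Multiset (ℝ × ℝ)} (hv : v ∈ Δ) (hw : w ∈ Δ)
    (hne : v ≠ w) :
    fsum (rectTransform v w Δ) = fsum Δ - (v.1 - w.1) * (v.2 - w.2) := by
  have hw' : w ∈ Δ.erase v := (Multiset.mem_erase_of_ne (Ne.symm hne)).2 hw
  rw [rectTransform, fsum_cons, fsum_cons, fsum_erase hw', fsum_erase hv]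
  ring

theorem stmt_3 (k : ℕ) (Δ : ℕ → Multiset (ℝ × ℝ)) (v w : ℕ → ℝ × ℝ)
    (hv : ∀ j < k, v j ∈ Δ j) (hw : ∀ j < k, w j ∈ Δ j)
    (hne : ∀ j < k, v j ≠ w j)
    (hstep : ∀ j < k, Δ (j + 1) = rectTransform (v j) (w j) (Δ j)) :
    ∑ j ∈ Finset.range k, (-(((v j).1 - (w j).1) * ((v j).2 - (w j).2)))
      = fsum (Δ k) - fsum (Δ 0) := by
  induction k with
  | zero => simp
  | succ n ih =>
    rw [Finset.sum_range_succ,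
      ih (fun j hj => hv j (hj.trans n.lt_succ_self))
        (fun j hj => hw j (hj.trans n.lt_succ_self))
        (fun j hj => hne j (hj.trans n.lt_succ_self))
        (fun j hj => hstep j (hj.trans n.lt_succ_self)),
      hstep n n.lt_succ_self,
      fsum_rect (hv n n.lt_succ_self) (hw n n.lt_succ_self) (hne n n.lt_succ_self)]
    ring
end

section
/- Let Δ0 → Δ1 → ⋯ → Δk be a sequence of finite multisets of points in ℝ² where each step is a transformation by a rectangle R_j with diagonal points (a_j, b_j) and (c_j, d_j), and define f(Δ) = Σ_{(x,y) ∈ Δ} x·y. Then Σ_{j=1}^{k} |a_j − c_j|·|b_j − d_j| ≥ |f(Δ_k) − f(Δ_0)|. That is, the total (unsigned) area of any transformation from Δ0 to Δk is at least |f(Δ_k) − f(Δ_0)|. -/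
theorem stmt_4 (k : ℕ) (Δ : ℕ → Multiset (ℝ × ℝ)) (v w : ℕ → ℝ × ℝ)
    (hv : ∀ j < k, v j ∈ Δ j) (hw : ∀ j < k, w j ∈ Δ j)
    (hne : ∀ j < k, v j ≠ w j)
    (hstep : ∀ j < k, Δ (j + 1) = rectTransform (v j) (w j) (Δ j)) :
    ∑ j ∈ Finset.range k, |(v j).1 - (w j).1| * |(v j).2 - (w j).2|
      ≥ |fsum (Δ k) - fsum (Δ 0)| := by
  induction k with
  | zero => simp
  | succ k ih =>
    have IH := ih (fun j hj => hv j (by omega)) (fun j hj => hw j (by omega))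
      (fun j hj => hne j (by omega)) (fun j hj => hstep j (by omega))
    have hk : k < k + 1 := Nat.lt_succ_self k
    have hstepk :
        |fsum (Δ (k + 1)) - fsum (Δ k)| = |(v k).1 - (w k).1| * |(v k).2 - (w k).2| := by
      have hvk := hv k hk
      have hwk : w k ∈ (Δ k).erase (v k) :=
        (Multiset.mem_erase_of_ne (hne k hk).symm).2 (hw k hk)
      have hΔk : Δ k = (v k) ::ₘ (w k) ::ₘ (((Δ k).erase (v k)).erase (w k)) := by
        rw [Multiset.cons_erase hwk, Multiset.cons_erase hvk]
      rw [hstep k hk, rectTransform]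
      conv_lhs => rw [hΔk]
      rw [Multiset.erase_cons_head, Multiset.erase_cons_head]
      simp only [fsum, Multiset.map_cons, Multiset.sum_cons]
      rw [show (w k).1 * (v k).2 + ((v k).1 * (w k).2 +
          ((((Δ k).erase (v k)).erase (w k)).map fun p => p.1 * p.2).sum) -
          ((v k).1 * (v k).2 + ((w k).1 * (w k).2 +
          ((((Δ k).erase (v k)).erase (w k)).map fun p => p.1 * p.2).sum)) =
          -(((v k).1 - (w k).1) * ((v k).2 - (w k).2)) by ring]
      rw [abs_neg, abs_mul]
    rw [Finset.sum_range_succ]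
    calc |fsum (Δ (k + 1)) - fsum (Δ 0)|
        ≤ |fsum (Δ (k + 1)) - fsum (Δ k)| + |fsum (Δ k) - fsum (Δ 0)| := by
          have := abs_sub_abs_le_abs_sub (fsum (Δ (k+1))) (fsum (Δ k))
          exact abs_sub_le _ _ _
      _ ≤ |(v k).1 - (w k).1| * |(v k).2 - (w k).2| +
          ∑ j ∈ Finset.range k, |(v j).1 - (w j).1| * |(v j).2 - (w j).2| := by
          rw [hstepk]; linarith [IH]
      _ = _ := by ring
end

section
/- Let v = (x1, y1), w = (x2, y2) be points in ℝ² with x1 ≠ x2 and y1 ≠ y2, and let ṽ = (x2, y1), w̃ = (x1, y2). Then every transformation (finite sequence of rectangle transformations) from the multiset {v, w} to the multiset {ṽ, w̃} has total area at least |x1 − x2|·|y1 − y2|, i.e., at least the area of the rectangle R(v, w); moreover the single transformation by R(v, w) attains this bound. -/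
noncomputable def fval (Δ : Multiset (ℝ × ℝ)) : ℝ :=
  (Δ.map (fun p : ℝ × ℝ => p.1 * p.2)).sum

lemma fval_step (p q : ℝ × ℝ) (Δ : Multiset (ℝ × ℝ)) (hp : p ∈ Δ) (hq : q ∈ Δ)
    (hpq : p ≠ q) :
    fval (rectTransform p q Δ) = fval Δ - (p.1 - q.1) * (p.2 - q.2) := by
  have hq' : q ∈ Δ.erase p := (Multiset.mem_erase_of_ne (Ne.symm hpq)).mpr hq
  have h1 : Δ = p ::ₘ Δ.erase p := (Multiset.cons_erase hp).symm
  have h2 : Δ.erase p = q ::ₘ (Δ.erase p).erase q := (Multiset.cons_erase hq').symm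
  rw [rectTransform]
  conv_rhs => rw [h1, h2]
  simp only [fval, Multiset.map_cons, Multiset.sum_cons]
  ring

lemma key (Δ : ℕ → Multiset (ℝ × ℝ)) (p q : ℕ → ℝ × ℝ) :
    ∀ k, (∀ j < k, p j ∈ Δ j) → (∀ j < k, q j ∈ Δ j) → (∀ j < k, p j ≠ q j) →
    (∀ j < k, Δ (j + 1) = rectTransform (p j) (q j) (Δ j)) →
    |fval (Δ k) - fval (Δ 0)| ≤
      ∑ j ∈ Finset.range k, |(p j).1 - (q j).1| * |(p j).2 - (q j).2| := by
  intro k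
  induction k with
  | zero => simp
  | succ n ih =>
    intro hp hq hpq hstep
    have hlt : n < n + 1 := Nat.lt_succ_self n
    have h1 : fval (Δ (n + 1)) = fval (Δ n) - ((p n).1 - (q n).1) * ((p n).2 - (q n).2) := by
      rw [hstep n hlt]
      exact fval_step _ _ _ (hp n hlt) (hq n hlt) (hpq n hlt)
    have ih' := ih (fun j hj => hp j (hj.trans hlt)) (fun j hj => hq j (hj.trans hlt))
      (fun j hj => hpq j (hj.trans hlt)) (fun j hj => hstep j (hj.trans hlt))
    rw [Finset.sum_range_succ]
    calc |fval (Δ (n + 1)) - fval (Δ 0)|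
        ≤ |fval (Δ n) - fval (Δ 0)| + |fval (Δ (n + 1)) - fval (Δ n)| := by
          have := abs_sub_abs_le_abs_sub (fval (Δ (n+1)) - fval (Δ 0)) (fval (Δ n) - fval (Δ 0))
          have h := abs_add_le (fval (Δ n) - fval (Δ 0)) (fval (Δ (n+1)) - fval (Δ n))
          calc |fval (Δ (n + 1)) - fval (Δ 0)|
              = |(fval (Δ n) - fval (Δ 0)) + (fval (Δ (n+1)) - fval (Δ n))| := by ring_nf
            _ ≤ _ := h
      _ ≤ (∑ j ∈ Finset.range n, |(p j).1 - (q j).1| * |(p j).2 - (q j).2|)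
            + |(p n).1 - (q n).1| * |(p n).2 - (q n).2| := by
          apply add_le_add ih'
          rw [h1]
          simp [abs_mul]
      _ = _ := by ring

theorem stmt_5 (x1 y1 x2 y2 : ℝ) (hx : x1 ≠ x2) (hy : y1 ≠ y2)
    (v w vt wt : ℝ × ℝ) (hv : v = (x1, y1)) (hw : w = (x2, y2))
    (hvt : vt = (x2, y1)) (hwt : wt = (x1, y2)) :
    (∀ (k : ℕ) (Δ : ℕ → Multiset (ℝ × ℝ)) (p q : ℕ → ℝ × ℝ),
      Δ 0 = {v, w} → Δ k = {vt, wt} →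
      (∀ j < k, p j ∈ Δ j) → (∀ j < k, q j ∈ Δ j) → (∀ j < k, p j ≠ q j) →
      (∀ j < k, Δ (j + 1) = rectTransform (p j) (q j) (Δ j)) →
      ∑ j ∈ Finset.range k, |(p j).1 - (q j).1| * |(p j).2 - (q j).2|
        ≥ |x1 - x2| * |y1 - y2|) ∧
    rectTransform v w {v, w} = {vt, wt} ∧
    |v.1 - w.1| * |v.2 - w.2| = |x1 - x2| * |y1 - y2| := by
  subst hv hw hvt hwt
  refine ⟨?_, ?_, by simp⟩
  · intro k Δ p q h0 hk hp hq hpq hstep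
    have hb := key Δ p q k hp hq hpq hstep
    have h0' : fval (Δ 0) = x1 * y1 + x2 * y2 := by
      rw [h0]; simp [fval, Multiset.insert_eq_cons]
    have hk' : fval (Δ k) = x2 * y1 + x1 * y2 := by
      rw [hk]; simp [fval, Multiset.insert_eq_cons]
    have : |fval (Δ k) - fval (Δ 0)| = |x1 - x2| * |y1 - y2| := by
      rw [h0', hk',
        show x2 * y1 + x1 * y2 - (x1 * y1 + x2 * y2) = -((x1 - x2) * (y1 - y2)) by ring,
        abs_neg, abs_mul]
    linarith [hb, this.symm.le]
  · rw [rectTransform]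
    have : ((x1, y1) : ℝ × ℝ) ≠ (x2, y2) := by simp [Prod.ext_iff]; intro h; exact absurd h hx
    simp [Multiset.insert_eq_cons, Multiset.erase_cons_tail, this]
end
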